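/- Let n ≥ 1, let f : ℝⁿ → ℝ be a Lipschitz function, and let U ⊆ ℝⁿ be a nonempty open set. Then (with Df defined almost everywhere by Rademacher's theorem) the essential supremum over U, with respect to Lebesgue measure, of x ↦ ‖Df(x)‖ equals sup_{x ∈ U} L_f(x); moreover, for each x ∈ U, L_f(x) = lim_{r → 0} ess sup_{B(x,r)} ‖Df‖. -/

import Mathlib

open Metric MeasureTheory Filter

/-- The Lipschitz constant of `f` on a set `K`, valued in `[0,∞]`. -/
noncomputable def lipConstOn {X Y : Type*} [MetricSpace X] [MetricSpace Y]
    (f : X → Y) (K : Set X) : ENNReal :=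
  sInf { L : ENNReal | ∀ x ∈ K, ∀ y ∈ K, edist (f x) (f y) ≤ L * edist x y }

/-- The local Lipschitz constant of `f` at `x`. -/
noncomputable def locLipConst {X Y : Type*} [MetricSpace X] [MetricSpace Y]
    (f : X → Y) (x : X) : ENNReal :=
  ⨅ (r : ℝ) (_ : 0 < r), lipConstOn f (ball x r)

section Aux

variable {X Y : Type*} [MetricSpace X] [MetricSpace Y]

lemma lipConstOn_le {f : X → Y} {K : Set X} {L : ENNReal}
    (h : ∀ x ∈ K, ∀ y ∈ K, edist (f x) (f y) ≤ L * edist x y) : lipConstOn f K ≤ L :=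
  sInf_le h

lemma edist_le_lipConstOn {f : X → Y} {K : Set X} {a b : X} (ha : a ∈ K) (hb : b ∈ K) :
    edist (f a) (f b) ≤ lipConstOn f K * edist a b := by
  by_cases he : edist a b = 0
  · have hab : a = b := by rwa [edist_eq_zero] at he
    simp [hab]
  · have hfin : edist a b ≠ ⊤ := edist_ne_top a b
    have h1 : edist (f a) (f b) / edist a b ≤ lipConstOn f K :=
      le_sInf fun L hL => ENNReal.div_le_of_le_mul (hL a ha b hb)
    calc edist (f a) (f b) = edist (f a) (f b) / edist a b * edist a b :=
          (ENNReal.div_mul_cancel he hfin).symm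
      _ ≤ lipConstOn f K * edist a b := mul_le_mul_left h1 _

lemma lipConstOn_mono {f : X → Y} {K K' : Set X} (h : K ⊆ K') :
    lipConstOn f K ≤ lipConstOn f K' :=
  sInf_le_sInf fun _ hL a ha b hb => hL a (h ha) b (h hb)

lemma nnnorm_fderiv_le_lipConstOn {E : Type*} [NormedAddCommGroup E] [NormedSpace ℝ E]
    {f : E → ℝ} {x : E} {s : ℝ} (hs : 0 < s) :
    (‖fderiv ℝ f x‖₊ : ENNReal) ≤ lipConstOn f (ball x s) := by
  set L := lipConstOn f (ball x s) with hLdef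
  rcases eq_top_or_lt_top L with h | h
  · simp [h]
  · have hlip : LipschitzOnWith L.toNNReal f (ball x s) := by
      intro a ha b hb
      have h2 := edist_le_lipConstOn (f := f) ha hb
      rw [ENNReal.coe_toNNReal h.ne, hLdef]
      exact h2
    have h3 : ‖fderiv ℝ f x‖ ≤ (L.toNNReal : ℝ) :=
      norm_fderiv_le_of_lipschitzOn ℝ (ball_mem_nhds x hs) hlip
    have h4 : ‖fderiv ℝ f x‖₊ ≤ L.toNNReal := h3
    calc (‖fderiv ℝ f x‖₊ : ENNReal) ≤ (L.toNNReal : ENNReal) := ENNReal.coe_le_coe.2 h4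
      _ = L := ENNReal.coe_toNNReal h.ne

end Aux

section Euclidean

variable {n : ℕ}

lemma essSup_ball_le {f : EuclideanSpace ℝ (Fin n) → ℝ}
    (x : EuclideanSpace ℝ (Fin n)) (r : ℝ) :
    essSup (fun y => (‖fderiv ℝ f y‖₊ : ENNReal)) (volume.restrict (ball x r)) ≤
      lipConstOn f (ball x r) := by
  refine essSup_le_of_ae_le _ ?_
  filter_upwards [ae_restrict_mem measurableSet_ball] with y hy
  obtain ⟨s, hs, hsub⟩ := Metric.isOpen_iff.1 isOpen_ball y hy
  exact (nnnorm_fderiv_le_lipConstOn hs).trans (lipConstOn_mono hsub)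

lemma ae_translate {P : EuclideanSpace ℝ (Fin n) → Prop}
    (h : ∀ᵐ z ∂(volume : Measure (EuclideanSpace ℝ (Fin n))), P z)
    (w : EuclideanSpace ℝ (Fin n)) :
    ∀ᵐ y ∂(volume : Measure (EuclideanSpace ℝ (Fin n))), P (w + y) := by
  have heq : {y : EuclideanSpace ℝ (Fin n) | ¬ P (w + y)} =
      (fun y => w + y) ⁻¹' {z | ¬ P z} := rfl
  rw [ae_iff, heq, measure_preimage_add]
  exact ae_iff.1 h

lemma lipConstOn_le_essSup {f : EuclideanSpace ℝ (Fin n) → ℝ} {K : NNReal}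
    (hK : LipschitzWith K f) (x : EuclideanSpace ℝ (Fin n)) {r' r : ℝ}
    (hr' : 0 < r') (hrr : r' < r) :
    lipConstOn f (ball x r') ≤
      essSup (fun y => (‖fderiv ℝ f y‖₊ : ENNReal)) (volume.restrict (ball x r)) := by
  set M := essSup (fun y => (‖fderiv ℝ f y‖₊ : ENNReal)) (volume.restrict (ball x r)) with hMdef
  rcases eq_top_or_lt_top M with htop | hfin
  · rw [htop]; exact le_top
  set m := M.toReal with hmdef
  have hm0 : 0 ≤ m := ENNReal.toReal_nonneg
  have hcont : Continuous f := hK.continuous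
  -- a.e. bound on the larger ball
  have hae : ∀ᵐ z ∂(volume : Measure (EuclideanSpace ℝ (Fin n))),
      z ∈ ball x r → ‖fderiv ℝ f z‖ ≤ m := by
    have h1 : ∀ᵐ z ∂(volume.restrict (ball x r)), (‖fderiv ℝ f z‖₊ : ENNReal) ≤ M :=
      ENNReal.ae_le_essSup _
    rw [ae_restrict_iff' measurableSet_ball] at h1
    filter_upwards [h1] with z hz hzball
    have h2 : ((‖fderiv ℝ f z‖₊ : ENNReal)).toReal ≤ m :=
      ENNReal.toReal_mono hfin.ne (hz hzball)
    simpa using h2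
  -- The key real estimate
  have key : ∀ a ∈ ball x r', ∀ b ∈ ball x r', dist (f a) (f b) ≤ m * dist a b := by
    intro a ha b hb
    have main : ∀ ε : ℝ, 0 < ε → ε < r - r' →
        dist (f a) (f b) ≤ m * dist a b + 2 * (K : ℝ) * ε := by
      intro ε hε hεlt
      set V := ball (0 : EuclideanSpace ℝ (Fin n)) ε with hVdef
      set μ := volume.restrict V with hμdef
      haveI : IsFiniteMeasure μ :=
        ⟨by rw [hμdef, Measure.restrict_apply_univ]; exact measure_ball_lt_top⟩
      set vr := (volume V).toReal with hvrdef
      have hvrpos : 0 < vr :=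
        ENNReal.toReal_pos (measure_ball_pos volume 0 hε).ne' measure_ball_lt_top.ne
      set w := fun t : ℝ => a + t • (b - a) with hwdef
      have hwball : ∀ t ∈ Set.Icc (0 : ℝ) 1, w t ∈ ball x r' := by
        intro t ht
        have hcomb : w t = (1 - t) • a + t • b := by rw [hwdef]; module
        rw [hcomb]
        exact (convex_ball x r') ha hb (by linarith [ht.2]) ht.1 (by ring)
      -- integrability of translates of f
      have hint : ∀ c : EuclideanSpace ℝ (Fin n), Integrable (fun y => f (c + y)) μ := by
        intro c
        have hc : Continuous fun y => f (c + y) :=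
          hcont.comp (continuous_const.add continuous_id)
        exact (hc.locallyIntegrable.integrableOn_isCompact
          (isCompact_closedBall 0 ε)).mono_set ball_subset_closedBall
      -- derivative of the averaged function along the segment
      have hderiv : ∀ t ∈ Set.Icc (0 : ℝ) 1,
          HasDerivAt (fun s : ℝ => ∫ y, f (w s + y) ∂μ)
            (∫ y, fderiv ℝ f (w t + y) (b - a) ∂μ) t ∧
          ‖∫ y, fderiv ℝ f (w t + y) (b - a) ∂μ‖ ≤ m * ‖b - a‖ * vr := by
        intro t ht
        have hdiffae : ∀ᵐ y ∂μ, DifferentiableAt ℝ f (w t + y) :=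
          ae_restrict_of_ae (ae_translate hK.ae_differentiableAt (w t))
        have hboundae : ∀ᵐ y ∂μ, ‖fderiv ℝ f (w t + y) (b - a)‖ ≤ m * ‖b - a‖ := by
          have h1 := ae_translate hae (w t)
          rw [hμdef, hVdef, ae_restrict_iff' measurableSet_ball]
          filter_upwards [h1] with y hy hyV
          have hmem : w t + y ∈ ball x r := by
            have h2 : dist (w t + y) (w t) < ε := by
              rw [dist_eq_norm]
              simpa using mem_ball_zero_iff.1 hyV
            calc dist (w t + y) x ≤ dist (w t + y) (w t) + dist (w t) x := dist_triangle _ _ _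
              _ < ε + r' := add_lt_add h2 (hwball t ht)
              _ ≤ r := by linarith
          calc ‖fderiv ℝ f (w t + y) (b - a)‖
              ≤ ‖fderiv ℝ f (w t + y)‖ * ‖b - a‖ := ContinuousLinearMap.le_opNorm _ _
            _ ≤ m * ‖b - a‖ := mul_le_mul_of_nonneg_right (hy hmem) (norm_nonneg _)
        -- apply the dominated derivative theorem
        have hmeas : ∀ᶠ s in nhds t, AEStronglyMeasurable (fun y => f (w s + y)) μ :=
          Eventually.of_forall fun s =>
            (hcont.comp (continuous_const.add continuous_id)).aestronglyMeasurable
        have hF'meas : AEStronglyMeasurable (fun y => fderiv ℝ f (w t + y) (b - a)) μ := by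
          have hmeas2 : Measurable fun z : EuclideanSpace ℝ (Fin n) => fderiv ℝ f z (b - a) :=
            measurable_fderiv_apply_const ℝ f (b - a)
          exact (hmeas2.comp (measurable_id.const_add (w t))).aestronglyMeasurable
        have hlipt : ∀ᵐ y ∂μ, LipschitzOnWith (Real.nnabs ((K : ℝ) * ‖b - a‖))
            (fun s : ℝ => f (w s + y)) (ball t 1) := by
          refine Eventually.of_forall fun y => ?_
          have hline : LipschitzWith ‖b - a‖₊ (fun s : ℝ => w s + y) := by
            apply LipschitzWith.of_dist_le_mul
            intro s u
            have hdiff2 : (w s + y) - (w u + y) = (s - u) • (b - a) := by rw [hwdef]; module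
            rw [dist_eq_norm, hdiff2, norm_smul, Real.dist_eq]
            simp [mul_comm]
          have hcomp := (hK.comp hline).weaken (K' := Real.nnabs ((K : ℝ) * ‖b - a‖)) ?_
          · exact hcomp.lipschitzOnWith
          · rw [← NNReal.coe_le_coe]
            have habs : |(K : ℝ) * ‖b - a‖| = (K : ℝ) * ‖b - a‖ :=
              abs_of_nonneg (by positivity)
            simp [Real.coe_nnabs, habs]
        have hdiff' : ∀ᵐ y ∂μ,
            HasDerivAt (fun s : ℝ => f (w s + y)) (fderiv ℝ f (w t + y) (b - a)) t := by
          filter_upwards [hdiffae] with y hy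
          have hline : HasDerivAt (fun s : ℝ => w s + y) (b - a) t := by
            have h1 : HasDerivAt (fun s : ℝ => s • (b - a)) (b - a) t := by
              simpa using (hasDerivAt_id t).smul_const (b - a)
            simpa [hwdef] using (h1.const_add a).add_const y
          exact hy.hasFDerivAt.comp_hasDerivAt t hline
        obtain ⟨hFint, hHderiv⟩ := hasDerivAt_integral_of_dominated_loc_of_lip (ball_mem_nhds t one_pos)
          hmeas (hint (w t)) hF'meas hlipt (integrable_const _) hdiff'
        refine ⟨hHderiv, ?_⟩
        calc ‖∫ y, fderiv ℝ f (w t + y) (b - a) ∂μ‖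
            ≤ ∫ _, m * ‖b - a‖ ∂μ := norm_integral_le_of_norm_le (integrable_const _) hboundae
          _ = m * ‖b - a‖ * vr := by
              rw [integral_const, hμdef, measureReal_restrict_apply_univ, measureReal_def, smul_eq_mul, ← hvrdef]
              ring
      -- mean value estimate along the segment
      set H := fun t : ℝ => ∫ y, f (w t + y) ∂μ with hHdef
      have hmv : ‖H 1 - H 0‖ ≤ m * ‖b - a‖ * vr * ‖(1 : ℝ) - 0‖ :=
        (convex_Icc (0 : ℝ) 1).norm_image_sub_le_of_norm_hasDerivWithin_le
          (fun t ht => ((hderiv t ht).1).hasDerivWithinAt)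
          (fun t ht => (hderiv t ht).2)
          (Set.left_mem_Icc.2 zero_le_one) (Set.right_mem_Icc.2 zero_le_one)
      -- averaging estimate
      have havg : ∀ c : EuclideanSpace ℝ (Fin n),
          |(∫ y, f (c + y) ∂μ) - vr * f c| ≤ (K : ℝ) * ε * vr := by
        intro c
        have h1 : (∫ y, f (c + y) ∂μ) - vr * f c = ∫ y, (f (c + y) - f c) ∂μ := by
          rw [integral_sub (hint c) (integrable_const _), integral_const, hμdef,
            measureReal_restrict_apply_univ, measureReal_def, smul_eq_mul, ← hvrdef]
        rw [h1, ← Real.norm_eq_abs]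
        calc ‖∫ y, (f (c + y) - f c) ∂μ‖ ≤ ∫ _, (K : ℝ) * ε ∂μ := by
              refine norm_integral_le_of_norm_le (integrable_const _) ?_
              rw [hμdef, hVdef]
              filter_upwards [ae_restrict_mem measurableSet_ball] with y hy
              have h2 : dist (f (c + y)) (f c) ≤ (K : ℝ) * dist (c + y) c := hK.dist_le_mul _ _
              have h3 : dist (c + y) c ≤ ε := by
                rw [dist_eq_norm]
                simpa using (mem_ball_zero_iff.1 hy).le
              calc ‖f (c + y) - f c‖ = dist (f (c + y)) (f c) := (dist_eq_norm _ _).symm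
                _ ≤ (K : ℝ) * dist (c + y) c := h2
                _ ≤ (K : ℝ) * ε := mul_le_mul_of_nonneg_left h3 K.coe_nonneg
          _ = (K : ℝ) * ε * vr := by
              rw [integral_const, hμdef, measureReal_restrict_apply_univ, measureReal_def, smul_eq_mul, ← hvrdef]
              ring
      -- combine everything
      have h10 : H 1 = ∫ y, f (b + y) ∂μ := by
        have hw1 : w 1 = b := by rw [hwdef]; module
        show (∫ y, f (w 1 + y) ∂μ) = _
        rw [hw1]
      have h00 : H 0 = ∫ y, f (a + y) ∂μ := by
        have hw0 : w 0 = a := by rw [hwdef]; module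
        show (∫ y, f (w 0 + y) ∂μ) = _
        rw [hw0]
      have t1 : |H 1 - vr * f b| ≤ (K : ℝ) * ε * vr := by rw [h10]; exact havg b
      have t2 : |H 0 - vr * f a| ≤ (K : ℝ) * ε * vr := by rw [h00]; exact havg a
      have t3 : |H 1 - H 0| ≤ m * ‖b - a‖ * vr := by
        have h4 := hmv
        rw [Real.norm_eq_abs] at h4
        simpa using h4
      have t4 : |f b - f a| * vr ≤ (m * ‖b - a‖ + 2 * (K : ℝ) * ε) * vr := by
        have h5 : |vr * f b - vr * f a| ≤ |vr * f b - H 1| + (|H 1 - H 0| + |H 0 - vr * f a|) :=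
          (abs_sub_le _ (H 1) _).trans (by gcongr; exact abs_sub_le _ (H 0) _)
        have h6 : |vr * f b - H 1| = |H 1 - vr * f b| := abs_sub_comm _ _
        have h7 : |f b - f a| * vr = |vr * f b - vr * f a| := by
          rw [abs_sub_comm (vr * f b), ← mul_sub, abs_mul, abs_of_nonneg hvrpos.le,
            abs_sub_comm, mul_comm]
        rw [h7]
        rw [h6] at h5
        nlinarith
      have t5 : |f b - f a| ≤ m * ‖b - a‖ + 2 * (K : ℝ) * ε :=
        le_of_mul_le_mul_right (by linarith) hvrpos
      calc dist (f a) (f b) = |f b - f a| := by rw [dist_comm, Real.dist_eq]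
        _ ≤ m * ‖b - a‖ + 2 * (K : ℝ) * ε := t5
        _ = m * dist a b + 2 * (K : ℝ) * ε := by rw [dist_eq_norm, norm_sub_rev]
    -- conclude from the ε-estimate
    refine le_of_forall_pos_le_add fun δ hδ => ?_
    have hK1 : (0 : ℝ) < 2 * (K : ℝ) + 1 := by positivity
    set ε := min (δ / (2 * (K : ℝ) + 1)) ((r - r') / 2) with hεdef
    have hεpos : 0 < ε := lt_min (by positivity) (by linarith)
    have hεlt : ε < r - r' := lt_of_le_of_lt (min_le_right _ _) (by linarith)
    have h1 := main ε hεpos hεlt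
    have h2 : 2 * (K : ℝ) * ε ≤ δ := by
      have h3 : ε ≤ δ / (2 * (K : ℝ) + 1) := min_le_left _ _
      rw [le_div_iff₀ hK1] at h3
      nlinarith [K.coe_nonneg, hεpos.le]
    linarith
  refine lipConstOn_le fun a ha b hb => ?_
  have hd := key a ha b hb
  calc edist (f a) (f b) = ENNReal.ofReal (dist (f a) (f b)) := edist_dist _ _
    _ ≤ ENNReal.ofReal (m * dist a b) := ENNReal.ofReal_le_ofReal hd
    _ = ENNReal.ofReal m * ENNReal.ofReal (dist a b) := ENNReal.ofReal_mul hm0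
    _ = M * edist a b := by rw [hmdef, ENNReal.ofReal_toReal hfin.ne, ← edist_dist]

end Euclidean

/-- Proposition 2.3 (ii) of the paper: for a Lipschitz function
`f : ℝⁿ → ℝ` and a nonempty open set `U`, the essential supremum over `U`
(w.r.t. Lebesgue measure) of the operator norm of the (a.e. defined) derivative
`Df` equals `sup_{x ∈ U} L_f(x)`, and for each `x ∈ U`,
`L_f(x) = lim_{r → 0} ess sup_{B(x,r)} ‖Df‖`. -/
theorem essSup_fderiv_eq_iSup_locLipConst (n : ℕ) (hn : 1 ≤ n)
    (f : EuclideanSpace ℝ (Fin n) → ℝ) (hf : ∃ K : NNReal, LipschitzWith K f)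
    (U : Set (EuclideanSpace ℝ (Fin n))) (hU : IsOpen U) (hUne : U.Nonempty) :
    (essSup (fun x => (‖fderiv ℝ f x‖₊ : ENNReal)) (volume.restrict U) =
        ⨆ x ∈ U, locLipConst f x) ∧
      ∀ x ∈ U,
        Tendsto
          (fun r : ℝ =>
            essSup (fun y => (‖fderiv ℝ f y‖₊ : ENNReal))
              (volume.restrict (ball x r)))
          (nhdsWithin 0 (Set.Ioi 0)) (nhds (locLipConst f x)) := by
  obtain ⟨K, hK⟩ := hf
  have hD : ∀ y : EuclideanSpace ℝ (Fin n), (‖fderiv ℝ f y‖₊ : ENNReal) ≤ locLipConst f y :=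
    fun y => le_iInf fun r => le_iInf fun hr => nnnorm_fderiv_le_lipConstOn hr
  constructor
  · apply le_antisymm
    · refine essSup_le_of_ae_le _ ?_
      filter_upwards [ae_restrict_mem hU.measurableSet] with y hy
      exact (hD y).trans (le_biSup _ hy)
    · refine iSup₂_le fun x hx => ?_
      obtain ⟨r, hr, hsub⟩ := Metric.isOpen_iff.1 hU x hx
      calc locLipConst f x ≤ lipConstOn f (ball x (r / 2)) := iInf₂_le (r / 2) (by linarith)
        _ ≤ essSup (fun y => (‖fderiv ℝ f y‖₊ : ENNReal)) (volume.restrict (ball x r)) :=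
            lipConstOn_le_essSup hK x (by linarith) (by linarith)
        _ ≤ essSup (fun y => (‖fderiv ℝ f y‖₊ : ENNReal)) (volume.restrict U) :=
            essSup_mono_measure
              (Measure.absolutelyContinuous_of_le (Measure.restrict_mono hsub le_rfl))
  · intro x hx
    set φ := fun r : ℝ =>
      essSup (fun y => (‖fderiv ℝ f y‖₊ : ENNReal)) (volume.restrict (ball x r)) with hφ
    have hmono : Monotone φ := fun r s hrs =>
      essSup_mono_measure
        (Measure.absolutelyContinuous_of_le (Measure.restrict_mono (ball_subset_ball hrs) le_rfl))
    have hlim := hmono.tendsto_nhdsGT 0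
    have heq : sInf (φ '' Set.Ioi 0) = locLipConst f x := by
      rw [sInf_image']
      apply le_antisymm
      · refine le_iInf fun r => le_iInf fun hr => ?_
        exact iInf_le_of_le ⟨r, hr⟩ (essSup_ball_le x r)
      · refine le_iInf fun r => ?_
        obtain ⟨r, hr⟩ := r
        calc locLipConst f x ≤ lipConstOn f (ball x (r / 2)) :=
              iInf₂_le (r / 2) (half_pos hr)
          _ ≤ φ r := lipConstOn_le_essSup hK x (half_pos hr) (half_lt_self hr)
    rw [heq] at hlim
    exact hlim
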